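/- Consider the configuration-model mean-field system with inertia δ = 0 and suppose α·f_min > β·e_max (sufficiently strong in-group love relative to out-group hate). Let c be a real number with 1/2 < c ≤ 1. Then every solution of the system on [0, ∞) with θ^B_{f,e}(0) = θ^R_{f,e}(0) = c for all (f,e) ∈ I satisfies θ^B_{f,e}(t) → 1 and θ^R_{f,e}(t) → 1 as t → ∞, for every (f,e) ∈ I (consensus on the initially more popular choice in every degree bin of both groups). -/

import Mathlib

open Set Filter

/-- Friend-weighted fraction with choice-1:
`P_F(t) = (Σ_{(f,e)} f·P_{f,e}·θ_{f,e}(t)) / (Σ_{(f,e)} f·P_{f,e})`,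
where `(f,e)` ranges over the index set `[fmin, fmax] × [emin, emax]`. -/
noncomputable def cfgPF (fmin fmax emin emax : ℕ) (P : ℕ → ℕ → ℝ)
    (θ : ℕ → ℕ → ℝ → ℝ) (t : ℝ) : ℝ :=
  (∑ f ∈ Finset.Icc fmin fmax, ∑ e ∈ Finset.Icc emin emax, (f : ℝ) * P f e * θ f e t) /
    (∑ f ∈ Finset.Icc fmin fmax, ∑ e ∈ Finset.Icc emin emax, (f : ℝ) * P f e)

/-- Enemy-weighted fraction with choice-1:
`P_E(t) = (Σ_{(f,e)} e·P_{f,e}·θ_{f,e}(t)) / (Σ_{(f,e)} e·P_{f,e})`. -/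
noncomputable def cfgPE (fmin fmax emin emax : ℕ) (P : ℕ → ℕ → ℝ)
    (θ : ℕ → ℕ → ℝ → ℝ) (t : ℝ) : ℝ :=
  (∑ f ∈ Finset.Icc fmin fmax, ∑ e ∈ Finset.Icc emin emax, (e : ℝ) * P f e * θ f e t) /
    (∑ f ∈ Finset.Icc fmin fmax, ∑ e ∈ Finset.Icc emin emax, (e : ℝ) * P f e)

/-- `g^B_{f,e}(t) = α·(f/(f+e))·(2P_F^B(t)−1) − β·(e/(f+e))·(2P_E^B(t)−1)`, where
`P_F^B` is the friend-weighted blue fraction and `P_E^B` the enemy-weighted red fraction. -/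
noncomputable def cfgGB (fmin fmax emin emax : ℕ) (PB PR : ℕ → ℕ → ℝ)
    (θB θR : ℕ → ℕ → ℝ → ℝ) (α β : ℝ) (f e : ℕ) (t : ℝ) : ℝ :=
  α * ((f : ℝ) / ((f : ℝ) + (e : ℝ))) * (2 * cfgPF fmin fmax emin emax PB θB t - 1)
    - β * ((e : ℝ) / ((f : ℝ) + (e : ℝ))) * (2 * cfgPE fmin fmax emin emax PR θR t - 1)

/-- `g^R_{f,e}(t) = α·(f/(f+e))·(2P_F^R(t)−1) − β·(e/(f+e))·(2P_E^R(t)−1)`, where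
`P_F^R` is the friend-weighted red fraction and `P_E^R` the enemy-weighted blue fraction. -/
noncomputable def cfgGR (fmin fmax emin emax : ℕ) (PB PR : ℕ → ℕ → ℝ)
    (θB θR : ℕ → ℕ → ℝ → ℝ) (α β : ℝ) (f e : ℕ) (t : ℝ) : ℝ :=
  α * ((f : ℝ) / ((f : ℝ) + (e : ℝ))) * (2 * cfgPF fmin fmax emin emax PR θR t - 1)
    - β * ((e : ℝ) / ((f : ℝ) + (e : ℝ))) * (2 * cfgPE fmin fmax emin emax PB θB t - 1)

/-- Right-hand side of the blue equation in bin `(f,e)`: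
`(1−θ^B_{f,e})·𝟙[g^B_{f,e}(t) > 0] − θ^B_{f,e}·𝟙[g^B_{f,e}(t) < 0]`. -/
noncomputable def cfgRhsB (fmin fmax emin emax : ℕ) (PB PR : ℕ → ℕ → ℝ)
    (θB θR : ℕ → ℕ → ℝ → ℝ) (α β : ℝ) (f e : ℕ) (t : ℝ) : ℝ :=
  (1 - θB f e t) * (if 0 < cfgGB fmin fmax emin emax PB PR θB θR α β f e t then 1 else 0)
    - θB f e t * (if cfgGB fmin fmax emin emax PB PR θB θR α β f e t < 0 then 1 else 0)

/-- Right-hand side of the red equation in bin `(f,e)`: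
`(1−θ^R_{f,e})·𝟙[g^R_{f,e}(t) > 0] − θ^R_{f,e}·𝟙[g^R_{f,e}(t) < 0]`. -/
noncomputable def cfgRhsR (fmin fmax emin emax : ℕ) (PB PR : ℕ → ℕ → ℝ)
    (θB θR : ℕ → ℕ → ℝ → ℝ) (α β : ℝ) (f e : ℕ) (t : ℝ) : ℝ :=
  (1 - θR f e t) * (if 0 < cfgGR fmin fmax emin emax PB PR θB θR α β f e t then 1 else 0)
    - θR f e t * (if cfgGR fmin fmax emin emax PB PR θB θR α β f e t < 0 then 1 else 0)

/-- The family `(θ^B_{f,e}, θ^R_{f,e})_{(f,e) ∈ [fmin,fmax] × [emin,emax]}` is a solution of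
the configuration-model mean-field system (inertia `δ = 0`) on the set `J`. -/
def IsCfgSolutionOn (fmin fmax emin emax : ℕ) (PB PR : ℕ → ℕ → ℝ)
    (θB θR : ℕ → ℕ → ℝ → ℝ) (α β : ℝ) (J : Set ℝ) : Prop :=
  ∀ f ∈ Finset.Icc fmin fmax, ∀ e ∈ Finset.Icc emin emax, ∀ t ∈ J,
    HasDerivWithinAt (θB f e)
      (cfgRhsB fmin fmax emin emax PB PR θB θR α β f e t) J t ∧
    HasDerivWithinAt (θR f e)
      (cfgRhsR fmin fmax emin emax PB PR θB θR α β f e t) J t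

private lemma cfg_sum_pos' {F E : Finset ℕ} (hF : F.Nonempty) (hE : E.Nonempty)
    {w : ℕ → ℕ → ℝ} (hw : ∀ f ∈ F, ∀ e ∈ E, 0 < w f e) :
    0 < ∑ f ∈ F, ∑ e ∈ E, w f e :=
  Finset.sum_pos (fun f hf => Finset.sum_pos (fun e he => hw f hf e he) hE) hF

private lemma cfg_eval' {F E : Finset ℕ} {w : ℕ → ℕ → ℝ}
    (hden : (∑ f ∈ F, ∑ e ∈ E, w f e) ≠ 0) {θ : ℕ → ℕ → ℝ → ℝ} {x t : ℝ}
    (hθ : ∀ f ∈ F, ∀ e ∈ E, θ f e t = x) :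
    (∑ f ∈ F, ∑ e ∈ E, w f e * θ f e t) / (∑ f ∈ F, ∑ e ∈ E, w f e) = x := by
  have h : (∑ f ∈ F, ∑ e ∈ E, w f e * θ f e t) = (∑ f ∈ F, ∑ e ∈ E, w f e) * x := by
    rw [Finset.sum_mul]
    refine Finset.sum_congr rfl fun f hf => ?_
    rw [Finset.sum_mul]
    exact Finset.sum_congr rfl fun e he => by rw [hθ f hf e he]
  rw [h, mul_comm, mul_div_assoc, div_self hden, mul_one]

private lemma cfg_eq_at_sup {g h : ℝ → ℝ} {T : ℝ} (hT : 0 < T)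
    (hg : ContinuousWithinAt g (Set.Ici 0) T) (hh : ContinuousWithinAt h (Set.Ici 0) T)
    (heq : ∀ t, 0 ≤ t → t < T → g t = h t) : g T = h T := by
  have hcl : T ∈ closure (Set.Ico 0 T) := by
    rw [closure_Ico hT.ne]; exact ⟨hT.le, le_refl T⟩
  have hne : (nhdsWithin T (Set.Ico 0 T)).NeBot := mem_closure_iff_nhdsWithin_neBot.mp hcl
  have h1 : Tendsto g (nhdsWithin T (Set.Ico 0 T)) (nhds (g T)) :=
    hg.mono Set.Ico_subset_Ici_self
  have h2 : Tendsto h (nhdsWithin T (Set.Ico 0 T)) (nhds (h T)) :=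
    hh.mono Set.Ico_subset_Ici_self
  have h3 : Tendsto g (nhdsWithin T (Set.Ico 0 T)) (nhds (h T)) :=
    Filter.Tendsto.congr' (eventually_nhdsWithin_of_forall fun x hx => (heq x hx.1 hx.2).symm) h2
  exact tendsto_nhds_unique h1 h3

/-- In the configuration-model mean-field system with `δ = 0`, if
`α·f_min > β·e_max` and `θ^B_{f,e}(0) = θ^R_{f,e}(0) = c` for all bins with `1/2 < c ≤ 1`,
then every solution on `[0,∞)` satisfies `θ^B_{f,e}(t) → 1` and `θ^R_{f,e}(t) → 1`
for every bin `(f,e)` (consensus on the initially more popular choice). -/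
theorem cfg_consensus_to_one
    (fmin fmax emin emax : ℕ)
    (hf1 : 1 ≤ fmin) (hf2 : fmin ≤ fmax) (he1 : 1 ≤ emin) (he2 : emin ≤ emax)
    (PB PR : ℕ → ℕ → ℝ)
    (hPB : ∀ f ∈ Finset.Icc fmin fmax, ∀ e ∈ Finset.Icc emin emax, 0 < PB f e)
    (hPR : ∀ f ∈ Finset.Icc fmin fmax, ∀ e ∈ Finset.Icc emin emax, 0 < PR f e)
    (α β : ℝ) (hα : α ∈ Set.Icc (0:ℝ) 1) (hβ : β ∈ Set.Icc (0:ℝ) 1)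
    (hdom : β * (emax : ℝ) < α * (fmin : ℝ))
    (c : ℝ) (hc1 : 1 / 2 < c) (hc2 : c ≤ 1)
    (θB θR : ℕ → ℕ → ℝ → ℝ)
    (hsol : IsCfgSolutionOn fmin fmax emin emax PB PR θB θR α β (Set.Ici 0))
    (h0 : ∀ f ∈ Finset.Icc fmin fmax, ∀ e ∈ Finset.Icc emin emax,
      θB f e 0 = c ∧ θR f e 0 = c) :
    ∀ f ∈ Finset.Icc fmin fmax, ∀ e ∈ Finset.Icc emin emax,
      Filter.Tendsto (θB f e) Filter.atTop (nhds (1:ℝ)) ∧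
      Filter.Tendsto (θR f e) Filter.atTop (nhds (1:ℝ)) := by
  obtain ⟨hα0, hα1⟩ := hα
  obtain ⟨hβ0, hβ1⟩ := hβ
  have hIFne : (Finset.Icc fmin fmax).Nonempty := Finset.nonempty_Icc.mpr hf2
  have hIEne : (Finset.Icc emin emax).Nonempty := Finset.nonempty_Icc.mpr he2
  set v : ℝ → ℝ := fun t => 1 - (1 - c) * Real.exp (-t) with hvdef
  have hv0 : v 0 = c := by simp [hvdef]
  have hvc : ∀ t, 0 ≤ t → c ≤ v t := by
    intro t ht
    have h1 : Real.exp (-t) ≤ 1 := Real.exp_le_one_iff.mpr (neg_nonpos.mpr ht)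
    have h3 : (1 - c) * Real.exp (-t) ≤ (1 - c) * 1 :=
      mul_le_mul_of_nonneg_left h1 (by linarith)
    simp only [hvdef]; linarith
  have hvhalf : ∀ t, 0 ≤ t → 1/2 < v t := fun t ht => lt_of_lt_of_le hc1 (hvc t ht)
  have hv_deriv : ∀ t, HasDerivAt v (1 - v t) t := by
    intro t
    have h1 : HasDerivAt (fun s : ℝ => Real.exp (-s)) (-Real.exp (-t)) t := by
      simpa [Function.comp_def] using (Real.hasDerivAt_exp (-t)).comp t (hasDerivAt_neg t)
    have h2 := (h1.const_mul (1 - c)).const_sub 1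
    refine h2.congr_deriv ?_
    simp only [hvdef]; ring
  have hvcont : Continuous v := by
    simp only [hvdef]
    exact continuous_const.sub (continuous_const.mul (Real.continuous_exp.comp continuous_neg))
  have hcontB : ∀ f ∈ Finset.Icc fmin fmax, ∀ e ∈ Finset.Icc emin emax,
      ContinuousOn (θB f e) (Set.Ici 0) :=
    fun f hf e he t ht => ((hsol f hf e he t ht).1).continuousWithinAt
  have hcontR : ∀ f ∈ Finset.Icc fmin fmax, ∀ e ∈ Finset.Icc emin emax,
      ContinuousOn (θR f e) (Set.Ici 0) :=
    fun f hf e he t ht => ((hsol f hf e he t ht).2).continuousWithinAt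
  have hcastf : ∀ f ∈ Finset.Icc fmin fmax, (0:ℝ) < (f:ℝ) := by
    intro f hf
    have h := (Finset.mem_Icc.mp hf).1
    have : 0 < f := by omega
    exact_mod_cast this
  have hcaste : ∀ e ∈ Finset.Icc emin emax, (0:ℝ) < (e:ℝ) := by
    intro e he
    have h := (Finset.mem_Icc.mp he).1
    have : 0 < e := by omega
    exact_mod_cast this
  have hdenBF : (0:ℝ) < ∑ f ∈ Finset.Icc fmin fmax, ∑ e ∈ Finset.Icc emin emax, (f:ℝ) * PB f e :=
    cfg_sum_pos' hIFne hIEne (fun f hf e he => mul_pos (hcastf f hf) (hPB f hf e he))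
  have hdenBE : (0:ℝ) < ∑ f ∈ Finset.Icc fmin fmax, ∑ e ∈ Finset.Icc emin emax, (e:ℝ) * PB f e :=
    cfg_sum_pos' hIFne hIEne (fun f hf e he => mul_pos (hcaste e he) (hPB f hf e he))
  have hdenRF : (0:ℝ) < ∑ f ∈ Finset.Icc fmin fmax, ∑ e ∈ Finset.Icc emin emax, (f:ℝ) * PR f e :=
    cfg_sum_pos' hIFne hIEne (fun f hf e he => mul_pos (hcastf f hf) (hPR f hf e he))
  have hdenRE : (0:ℝ) < ∑ f ∈ Finset.Icc fmin fmax, ∑ e ∈ Finset.Icc emin emax, (e:ℝ) * PR f e :=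
    cfg_sum_pos' hIFne hIEne (fun f hf e he => mul_pos (hcaste e he) (hPR f hf e he))
  -- continuity of the mean-field quantities
  have hPFBcont : ContinuousOn (cfgPF fmin fmax emin emax PB θB) (Set.Ici 0) := by
    unfold cfgPF
    exact ContinuousOn.div_const
      (continuousOn_finset_sum _ fun f hf => continuousOn_finset_sum _ fun e he =>
        continuousOn_const.mul (hcontB f hf e he)) _
  have hPFRcont : ContinuousOn (cfgPF fmin fmax emin emax PR θR) (Set.Ici 0) := by
    unfold cfgPF
    exact ContinuousOn.div_const
      (continuousOn_finset_sum _ fun f hf => continuousOn_finset_sum _ fun e he =>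
        continuousOn_const.mul (hcontR f hf e he)) _
  have hPEBcont : ContinuousOn (cfgPE fmin fmax emin emax PB θB) (Set.Ici 0) := by
    unfold cfgPE
    exact ContinuousOn.div_const
      (continuousOn_finset_sum _ fun f hf => continuousOn_finset_sum _ fun e he =>
        continuousOn_const.mul (hcontB f hf e he)) _
  have hPERcont : ContinuousOn (cfgPE fmin fmax emin emax PR θR) (Set.Ici 0) := by
    unfold cfgPE
    exact ContinuousOn.div_const
      (continuousOn_finset_sum _ fun f hf => continuousOn_finset_sum _ fun e he =>
        continuousOn_const.mul (hcontR f hf e he)) _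
  have hGBcont : ∀ f e : ℕ,
      ContinuousOn (cfgGB fmin fmax emin emax PB PR θB θR α β f e) (Set.Ici 0) := by
    intro f e
    unfold cfgGB
    exact (continuousOn_const.mul ((continuousOn_const.mul hPFBcont).sub
      continuousOn_const)).sub (continuousOn_const.mul
      ((continuousOn_const.mul hPERcont).sub continuousOn_const))
  have hGRcont : ∀ f e : ℕ,
      ContinuousOn (cfgGR fmin fmax emin emax PB PR θB θR α β f e) (Set.Ici 0) := by
    intro f e
    unfold cfgGR
    exact (continuousOn_const.mul ((continuousOn_const.mul hPFRcont).sub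
      continuousOn_const)).sub (continuousOn_const.mul
      ((continuousOn_const.mul hPEBcont).sub continuousOn_const))
  -- positivity of g when all θ's are equal to a common value > 1/2
  have hgpos : ∀ t, 0 ≤ t →
      (∀ f ∈ Finset.Icc fmin fmax, ∀ e ∈ Finset.Icc emin emax,
        θB f e t = v t ∧ θR f e t = v t) →
      ∀ f ∈ Finset.Icc fmin fmax, ∀ e ∈ Finset.Icc emin emax,
        0 < cfgGB fmin fmax emin emax PB PR θB θR α β f e t ∧
        0 < cfgGR fmin fmax emin emax PB PR θB θR α β f e t := by
    intro t ht hQ f hf e he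
    have hPFB : cfgPF fmin fmax emin emax PB θB t = v t := by
      unfold cfgPF
      exact cfg_eval' hdenBF.ne' (fun f hf e he => (hQ f hf e he).1)
    have hPFR : cfgPF fmin fmax emin emax PR θR t = v t := by
      unfold cfgPF
      exact cfg_eval' hdenRF.ne' (fun f hf e he => (hQ f hf e he).2)
    have hPEB : cfgPE fmin fmax emin emax PB θB t = v t := by
      unfold cfgPE
      exact cfg_eval' hdenBE.ne' (fun f hf e he => (hQ f hf e he).1)
    have hPER : cfgPE fmin fmax emin emax PR θR t = v t := by
      unfold cfgPE
      exact cfg_eval' hdenRE.ne' (fun f hf e he => (hQ f hf e he).2)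
    have hfpos := hcastf f hf
    have hepos := hcaste e he
    have hfe : (0:ℝ) < (f:ℝ) + (e:ℝ) := by linarith
    obtain ⟨hfl, hfu⟩ := Finset.mem_Icc.mp hf
    obtain ⟨hel, heu⟩ := Finset.mem_Icc.mp he
    have hαf : α * (fmin:ℝ) ≤ α * (f:ℝ) :=
      mul_le_mul_of_nonneg_left (by exact_mod_cast hfl) hα0
    have hβe : β * (e:ℝ) ≤ β * (emax:ℝ) :=
      mul_le_mul_of_nonneg_left (by exact_mod_cast heu) hβ0
    have hnum : 0 < α * (f:ℝ) - β * (e:ℝ) := by linarith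
    have hx : 1/2 < v t := hvhalf t ht
    have hkey : ∀ y : ℝ, 1/2 < y →
        0 < α * ((f:ℝ) / ((f:ℝ) + (e:ℝ))) * (2 * y - 1)
          - β * ((e:ℝ) / ((f:ℝ) + (e:ℝ))) * (2 * y - 1) := by
      intro y hy
      have hform : α * ((f:ℝ) / ((f:ℝ) + (e:ℝ))) * (2 * y - 1)
          - β * ((e:ℝ) / ((f:ℝ) + (e:ℝ))) * (2 * y - 1)
          = (2 * y - 1) * ((α * (f:ℝ) - β * (e:ℝ)) / ((f:ℝ) + (e:ℝ))) := by
        field_simp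
      rw [hform]
      exact mul_pos (by linarith) (div_pos hnum hfe)
    constructor
    · unfold cfgGB
      rw [hPFB, hPER]
      exact hkey _ hx
    · unfold cfgGR
      rw [hPFR, hPEB]
      exact hkey _ hx
  -- the main invariance claim
  have key : ∀ t, 0 ≤ t → ∀ f ∈ Finset.Icc fmin fmax, ∀ e ∈ Finset.Icc emin emax,
      θB f e t = v t ∧ θR f e t = v t := by
    set Q : ℝ → Prop := fun t => ∀ f ∈ Finset.Icc fmin fmax, ∀ e ∈ Finset.Icc emin emax,
      θB f e t = v t ∧ θR f e t = v t with hQdef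
    show ∀ t, 0 ≤ t → Q t
    by_contra hcon
    push_neg at hcon
    obtain ⟨t0, ht0, hnQ⟩ := hcon
    set S : Set ℝ := {t | 0 ≤ t ∧ ¬ Q t} with hSdef
    have hSne : S.Nonempty := ⟨t0, ht0, hnQ⟩
    have hSbd : BddBelow S := ⟨0, fun x hx => hx.1⟩
    set T := sInf S with hTdef
    have hT0 : 0 ≤ T := le_csInf hSne fun x hx => hx.1
    have hbefore : ∀ t, 0 ≤ t → t < T → Q t := by
      intro t h1 h2
      by_contra h
      exact absurd (csInf_le hSbd ⟨h1, h⟩) (not_le.mpr h2)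
    have hQ0 : Q 0 := by
      intro f hf e he
      rw [hv0]
      exact h0 f hf e he
    have hQT : Q T := by
      rcases eq_or_lt_of_le hT0 with h | h
      · rw [← h]; exact hQ0
      · intro f hf e he
        have hTm : T ∈ Set.Ici (0:ℝ) := hT0
        constructor
        · exact cfg_eq_at_sup h (hcontB f hf e he T hTm)
            (hvcont.continuousWithinAt)
            (fun t h1 h2 => (hbefore t h1 h2 f hf e he).1)
        · exact cfg_eq_at_sup h (hcontR f hf e he T hTm)
            (hvcont.continuousWithinAt)
            (fun t h1 h2 => (hbefore t h1 h2 f hf e he).2)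
    have hgT := hgpos T hT0 hQT
    -- all g's stay positive slightly beyond T
    have hev : ∀ᶠ t in nhdsWithin T (Set.Ici 0),
        ∀ f ∈ Finset.Icc fmin fmax, ∀ e ∈ Finset.Icc emin emax,
          0 < cfgGB fmin fmax emin emax PB PR θB θR α β f e t ∧
          0 < cfgGR fmin fmax emin emax PB PR θB θR α β f e t := by
      rw [Filter.eventually_all_finset]
      intro f hf
      rw [Filter.eventually_all_finset]
      intro e he
      have h1 : Tendsto (cfgGB fmin fmax emin emax PB PR θB θR α β f e)
          (nhdsWithin T (Set.Ici 0))
          (nhds (cfgGB fmin fmax emin emax PB PR θB θR α β f e T)) :=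
        hGBcont f e T hT0
      have h2 : Tendsto (cfgGR fmin fmax emin emax PB PR θB θR α β f e)
          (nhdsWithin T (Set.Ici 0))
          (nhds (cfgGR fmin fmax emin emax PB PR θB θR α β f e T)) :=
        hGRcont f e T hT0
      exact (h1.eventually (eventually_gt_nhds (hgT f hf e he).1)).and
        (h2.eventually (eventually_gt_nhds (hgT f hf e he).2))
    obtain ⟨ε, hε, hsub⟩ := Metric.mem_nhdsWithin_iff.mp hev
    have hs₀sub : Set.Icc T (T + ε/2) ⊆ Metric.ball T ε ∩ Set.Ici 0 := by
      intro t ⟨h1, h2⟩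
      refine ⟨?_, le_trans hT0 h1⟩
      rw [Metric.mem_ball, Real.dist_eq, abs_lt]
      constructor <;> [linarith; linarith]
    have hgs₀ : ∀ t ∈ Set.Icc T (T + ε/2),
        ∀ f ∈ Finset.Icc fmin fmax, ∀ e ∈ Finset.Icc emin emax,
          0 < cfgGB fmin fmax emin emax PB PR θB θR α β f e t ∧
          0 < cfgGR fmin fmax emin emax PB PR θB θR α β f e t :=
      fun t ht => hsub (hs₀sub ht)
    have hs₀Ici : Set.Icc T (T + ε/2) ⊆ Set.Ici (0:ℝ) :=
      fun t ht => le_trans hT0 ht.1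
    -- a general uniqueness-style step for the linear ODE θ' = 1 - θ
    have hone : ∀ (θf : ℝ → ℝ),
        (∀ s ∈ Set.Icc T (T + ε/2), HasDerivWithinAt θf (1 - θf s) (Set.Icc T (T + ε/2)) s) →
        θf T = v T → ∀ t ∈ Set.Icc T (T + ε/2), θf t = v t := by
      intro θf hder hTeq t ht
      set w : ℝ → ℝ := fun s => Real.exp s * (θf s - v s) with hwdef
      have hw' : ∀ s ∈ Set.Icc T (T + ε/2), HasDerivWithinAt w 0 (Set.Icc T (T + ε/2)) s := by
        intro s hs
        have h1 : HasDerivWithinAt (fun s : ℝ => Real.exp s) (Real.exp s)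
            (Set.Icc T (T + ε/2)) s := (Real.hasDerivAt_exp s).hasDerivWithinAt
        have h2 : HasDerivWithinAt (fun s => θf s - v s) ((1 - θf s) - (1 - v s))
            (Set.Icc T (T + ε/2)) s := (hder s hs).sub ((hv_deriv s).hasDerivWithinAt)
        have h3 := h1.mul h2
        refine h3.congr_deriv ?_
        ring
      have hTmem : T ∈ Set.Icc T (T + ε/2) := Set.left_mem_Icc.mpr (by linarith)
      have hbound := Convex.norm_image_sub_le_of_norm_hasDerivWithin_le (C := 0)
        (f' := fun _ => (0:ℝ)) hw'
        (fun s _ => by simp) (convex_Icc _ _) hTmem ht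
      have hwT : w T = 0 := by
        simp [hwdef, hTeq]
      have hwt : w t = w T := by
        have : ‖w t - w T‖ ≤ 0 := by simpa using hbound
        have := norm_le_zero_iff.mp this
        linarith [sub_eq_zero.mp this]
      have hzero : Real.exp t * (θf t - v t) = 0 := by
        rw [← hwT]; exact hwt
      rcases mul_eq_zero.mp hzero with h | h
      · exact absurd h (Real.exp_ne_zero t)
      · linarith [sub_eq_zero.mp h]
    -- on [T, T+ε/2] every θ solves θ' = 1 - θ, hence equals v
    have hext : ∀ t ∈ Set.Icc T (T + ε/2), Q t := by
      intro t ht f hf e he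
      have hODEB : ∀ s ∈ Set.Icc T (T + ε/2),
          HasDerivWithinAt (θB f e) (1 - θB f e s) (Set.Icc T (T + ε/2)) s := by
        intro s hs
        have hd := ((hsol f hf e he s (hs₀Ici hs)).1).mono hs₀Ici
        have hg := (hgs₀ s hs f hf e he).1
        have hr : cfgRhsB fmin fmax emin emax PB PR θB θR α β f e s = 1 - θB f e s := by
          unfold cfgRhsB
          rw [if_pos hg, if_neg (asymm hg)]
          ring
        rwa [hr] at hd
      have hODER : ∀ s ∈ Set.Icc T (T + ε/2),
          HasDerivWithinAt (θR f e) (1 - θR f e s) (Set.Icc T (T + ε/2)) s := by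
        intro s hs
        have hd := ((hsol f hf e he s (hs₀Ici hs)).2).mono hs₀Ici
        have hg := (hgs₀ s hs f hf e he).2
        have hr : cfgRhsR fmin fmax emin emax PB PR θB θR α β f e s = 1 - θR f e s := by
          unfold cfgRhsR
          rw [if_pos hg, if_neg (asymm hg)]
          ring
        rwa [hr] at hd
      exact ⟨hone (θB f e) hODEB (hQT f hf e he).1 t ht,
        hone (θR f e) hODER (hQT f hf e he).2 t ht⟩
    -- contradiction with T = sInf S
    have hgood : ∀ s ∈ S, T + ε/2 ≤ s := by
      intro s hs
      by_contra hle
      push_neg at hle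
      have hQs : Q s := by
        rcases lt_or_ge s T with h | h
        · exact hbefore s hs.1 h
        · exact hext s ⟨h, hle.le⟩
      exact hs.2 hQs
    have : T + ε/2 ≤ T := le_csInf hSne hgood
    linarith
  -- conclude the limits
  have hv1 : Tendsto v atTop (nhds (1:ℝ)) := by
    have h1 := Real.tendsto_exp_neg_atTop_nhds_zero.const_mul (1 - c)
    have h2 : Tendsto (fun t : ℝ => 1 - (1 - c) * Real.exp (-t)) atTop
        (nhds (1 - (1 - c) * 0)) := (tendsto_const_nhds (x := (1:ℝ))).sub h1
    simpa [hvdef] using h2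
  intro f hf e he
  constructor
  · refine Filter.Tendsto.congr' ?_ hv1
    exact (Filter.eventually_ge_atTop 0).mono fun t ht => ((key t ht f hf e he).1).symm
  · refine Filter.Tendsto.congr' ?_ hv1
    exact (Filter.eventually_ge_atTop 0).mono fun t ht => ((key t ht f hf e he).2).symm
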